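/- Let 2 ≤ α ≤ 3. The Horodecki density ρ_α on C³ ⊗ C³, whose entries are ρ_{nn,mm} = 2/21 for all n, m ∈ Z_3, ρ_{n(n+1),n(n+1)} = α/21 and ρ_{n(n+2),n(n+2)} = (5−α)/21 for all n ∈ Z_3 (addition mod 3), with all other entries zero, is separable. -/

import Mathlib

open Matrix Kronecker
open scoped ComplexOrder

noncomputable section

namespace HorodeckiAux

noncomputable def ω : ℂ := Complex.exp ((2 * Real.pi / 3 : ℝ) * Complex.I)

lemma hωprim : IsPrimitiveRoot ω 3 := by
  have := Complex.isPrimitiveRoot_exp 3 (by norm_num)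
  rw [ω, show (((2 * Real.pi / 3 : ℝ)) * Complex.I : ℂ) = 2 * ↑Real.pi * Complex.I / (3:ℕ) by push_cast; ring]
  exact this

lemma hω3 : ω ^ 3 = 1 := hωprim.pow_eq_one

lemma habsω : ‖ω‖ = 1 := Complex.norm_exp_ofReal_mul_I _

lemma sumZ3 (f : ZMod 3 → ℂ) : ∑ n, f n = f 0 + f 1 + f 2 := by
  show ∑ n : Fin 3, f n = _
  exact Fin.sum_univ_three f

lemma ωpow_mod (m : ℕ) : ω ^ m = ω ^ (m % 3) := by
  conv_lhs => rw [← Nat.mod_add_div m 3]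
  rw [pow_add, pow_mul, hω3, one_pow, mul_one]

noncomputable def g (a : ZMod 3) : ℂ := ω ^ a.val

lemma g_zero : g 0 = 1 := by simp [g]

lemma g_add (a b : ZMod 3) : g (a + b) = g a * g b := by
  rw [g, g, g, ZMod.val_add, ← ωpow_mod, pow_add]

lemma z3cases (c : ZMod 3) : c = 0 ∨ c = 1 ∨ c = 2 := by revert c; decide

lemma g_mul_conj (a : ZMod 3) : g a * (starRingEnd ℂ) (g a) = 1 := by
  have habs : ‖g a‖ = 1 := by rw [g, norm_pow, habsω, one_pow]
  rw [Complex.mul_conj, Complex.normSq_eq_norm_sq, habs]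
  norm_num

lemma g_ne (a : ZMod 3) : g a ≠ 0 := by
  intro h
  have := g_mul_conj a
  rw [h] at this
  simp at this

lemma conj_g (a : ZMod 3) : (starRingEnd ℂ) (g a) = g (-a) := by
  have h1 : g a * g (-a) = 1 := by rw [← g_add]; simp [g_zero]
  have h2 := g_mul_conj a
  have := h1.trans h2.symm
  exact (mul_left_cancel₀ (g_ne a) this).symm

lemma sum_g : ∑ a : ZMod 3, g a = 0 := by
  rw [sumZ3]
  have h := hωprim.geom_sum_eq_zero (by norm_num)
  rw [Finset.sum_range_succ, Finset.sum_range_succ, Finset.sum_range_succ,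
    Finset.sum_range_zero] at h
  have hv0 : ((0 : ZMod 3)).val = 0 := rfl
  have hv1 : ((1 : ZMod 3)).val = 1 := rfl
  have hv2 : ((2 : ZMod 3)).val = 2 := rfl
  rw [g, g, g, hv0, hv1, hv2]
  linear_combination h

lemma sum_g_mul (c : ZMod 3) : ∑ s : ZMod 3, g (c * s) = if c = 0 then 3 else 0 := by
  have h := sum_g
  rw [sumZ3] at h
  rcases z3cases c with hc|hc|hc <;> subst hc
  · rw [if_pos rfl, sumZ3]
    norm_num [g_zero]
  · rw [if_neg (by decide), sumZ3]
    rw [show ((1:ZMod 3) * 0) = 0 from rfl, show ((1:ZMod 3) * 1) = 1 from rfl,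
      show ((1:ZMod 3) * 2) = 2 from rfl]
    exact h
  · rw [if_neg (by decide), sumZ3]
    rw [show ((2:ZMod 3) * 0) = 0 from rfl, show ((2:ZMod 3) * 1) = 2 from rfl,
      show ((2:ZMod 3) * 2) = 1 from rfl]
    linear_combination h

noncomputable def outer (x : ZMod 3 → ℂ) : Matrix (ZMod 3) (ZMod 3) ℂ :=
  Matrix.of fun j k => x j * (starRingEnd ℂ) (x k)

lemma outer_posSemidef (x : ZMod 3 → ℂ) : (outer x).PosSemidef := by
  have heq : outer x =
      (Matrix.of fun (_ : Fin 1) (j : ZMod 3) => (starRingEnd ℂ) (x j))ᴴ *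
      (Matrix.of fun (_ : Fin 1) (j : ZMod 3) => (starRingEnd ℂ) (x j)) := by
    ext j k
    simp [outer, Matrix.mul_apply, Matrix.conjTranspose_apply, Fin.sum_univ_one]
  rw [heq]
  exact Matrix.posSemidef_conjTranspose_mul_self _

lemma outer_trace (x : ZMod 3 → ℂ) :
    (outer x).trace = ∑ n, x n * (starRingEnd ℂ) (x n) := by
  simp [outer, Matrix.trace, Matrix.diag]

noncomputable def r : ℝ := (Real.sqrt 3)⁻¹

lemma r_sq : (r : ℂ) * (r : ℂ) = 1 / 3 := by
  have : r * r = 1 / 3 := by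
    rw [r, ← mul_inv]
    rw [Real.mul_self_sqrt (by norm_num)]
    norm_num
  calc (r : ℂ) * r = ((r * r : ℝ) : ℂ) := by push_cast; ring
    _ = 1/3 := by rw [this]; norm_num

def χ1 (n : ZMod 3) : ZMod 3 := if n = 1 then 1 else 0
def χ2 (n : ZMod 3) : ZMod 3 := if n = 2 then 1 else 0

noncomputable def ex (s t n : ZMod 3) : ZMod 3 := χ1 n * s + χ2 n * t

noncomputable def v (s t n : ZMod 3) : ℂ := (r : ℂ) * g (ex s t n)

lemma v_mul_conj (s t n : ZMod 3) : v s t n * (starRingEnd ℂ) (v s t n) = 1 / 3 := by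
  rw [v, _root_.map_mul, Complex.conj_ofReal]
  calc (r:ℂ) * g (ex s t n) * ((r:ℂ) * (starRingEnd ℂ) (g (ex s t n)))
      = ((r:ℂ) * r) * (g (ex s t n) * (starRingEnd ℂ) (g (ex s t n))) := by ring
    _ = 1/3 := by rw [r_sq, g_mul_conj, mul_one]

noncomputable def δv (n : ZMod 3) : ZMod 3 → ℂ := fun m => if m = n then 1 else 0

lemma trace_outer_v (s t : ZMod 3) : (outer (v s t)).trace = 1 := by
  rw [outer_trace, sumZ3, v_mul_conj, v_mul_conj, v_mul_conj]
  norm_num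

lemma trace_outer_vc (s t : ZMod 3) :
    (outer (fun n => (starRingEnd ℂ) (v s t n))).trace = 1 := by
  rw [outer_trace, sumZ3]
  have h : ∀ n, (starRingEnd ℂ) (v s t n) * (starRingEnd ℂ) ((starRingEnd ℂ) (v s t n)) = 1/3 := by
    intro n
    rw [Complex.conj_conj]
    rw [mul_comm]
    exact v_mul_conj s t n
  rw [h, h, h]
  norm_num

lemma trace_outer_δ (n : ZMod 3) : (outer (δv n)).trace = 1 := by
  rw [outer_trace]
  have h : ∀ m, δv n m * (starRingEnd ℂ) (δv n m) = if m = n then (1:ℂ) else 0 := by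
    intro m; by_cases h : m = n <;> simp [δv, h]
  rw [Finset.sum_congr rfl fun m _ => h m]
  simp


lemma outer_v_apply (s t j k : ZMod 3) :
    outer (v s t) j k = (1/3 : ℂ) * g (ex s t j - ex s t k) := by
  show v s t j * (starRingEnd ℂ) (v s t k) = _
  rw [v, v, _root_.map_mul, Complex.conj_ofReal, conj_g]
  rw [sub_eq_add_neg, g_add]
  calc (r:ℂ) * g (ex s t j) * ((r:ℂ) * g (-ex s t k))
      = ((r:ℂ) * r) * (g (ex s t j) * g (-ex s t k)) := by ring
    _ = _ := by rw [r_sq]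

lemma outer_vc_apply (s t j k : ZMod 3) :
    outer (fun n => (starRingEnd ℂ) (v s t n)) j k = (1/3 : ℂ) * g (ex s t k - ex s t j) := by
  show (starRingEnd ℂ) (v s t j) * (starRingEnd ℂ) ((starRingEnd ℂ) (v s t k)) = _
  rw [Complex.conj_conj, v, _root_.map_mul, Complex.conj_ofReal, conj_g, v]
  rw [sub_eq_add_neg, g_add]
  calc (r:ℂ) * g (-ex s t j) * ((r:ℂ) * g (ex s t k))
      = ((r:ℂ) * r) * (g (ex s t k) * g (-ex s t j)) := by ring
    _ = _ := by rw [r_sq]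

lemma kron_bell (s t j1 j2 k1 k2 : ZMod 3) :
    (outer (v s t) ⊗ₖ outer (fun n => (starRingEnd ℂ) (v s t n))) (j1,j2) (k1,k2)
      = (1/9 : ℂ) * g ((χ1 j1 - χ1 k1 - χ1 j2 + χ1 k2) * s
          + (χ2 j1 - χ2 k1 - χ2 j2 + χ2 k2) * t) := by
  rw [Matrix.kroneckerMap_apply, outer_v_apply, outer_vc_apply]
  have hex : (ex s t j1 - ex s t k1) + (ex s t k2 - ex s t j2)
      = (χ1 j1 - χ1 k1 - χ1 j2 + χ1 k2) * s + (χ2 j1 - χ2 k1 - χ2 j2 + χ2 k2) * t := by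
    simp only [ex]; ring
  rw [← hex, g_add]
  ring

lemma cond_iff (j1 j2 k1 k2 : ZMod 3) :
    ((χ1 j1 - χ1 k1 - χ1 j2 + χ1 k2 = 0) ∧ (χ2 j1 - χ2 k1 - χ2 j2 + χ2 k2 = 0))
      ↔ ((j1 = k1 ∧ j2 = k2) ∨ (j1 = j2 ∧ k1 = k2)) := by
  revert j1 j2 k1 k2; decide

lemma bell_sum (j1 j2 k1 k2 : ZMod 3) :
    ∑ p : ZMod 3 × ZMod 3,
      (outer (v p.1 p.2) ⊗ₖ outer (fun n => (starRingEnd ℂ) (v p.1 p.2 n))) (j1,j2) (k1,k2)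
    = if (j1 = k1 ∧ j2 = k2) ∨ (j1 = j2 ∧ k1 = k2) then 1 else 0 := by
  set c1 := χ1 j1 - χ1 k1 - χ1 j2 + χ1 k2 with hc1
  set c2 := χ2 j1 - χ2 k1 - χ2 j2 + χ2 k2 with hc2
  rw [Finset.sum_congr rfl fun p _ => kron_bell p.1 p.2 j1 j2 k1 k2]
  rw [Fintype.sum_prod_type]
  have hst : ∀ s : ZMod 3, ∑ t : ZMod 3, (1/9 : ℂ) * g (c1 * s + c2 * t)
      = (1/9 : ℂ) * (g (c1 * s) * ∑ t : ZMod 3, g (c2 * t)) := by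
    intro s
    simp only [Finset.mul_sum]
    refine Finset.sum_congr rfl fun t _ => ?_
    rw [g_add]
  rw [Finset.sum_congr rfl fun s _ => hst s]
  have hsplit : ∑ s : ZMod 3, (1/9 : ℂ) * (g (c1 * s) * ∑ t : ZMod 3, g (c2 * t))
      = (1/9 : ℂ) * ((∑ s : ZMod 3, g (c1 * s)) * (∑ t : ZMod 3, g (c2 * t))) := by
    simp only [Finset.sum_mul, Finset.mul_sum]
    rw [Finset.sum_comm]
  rw [hsplit, sum_g_mul, sum_g_mul]
  have hiff := cond_iff j1 j2 k1 k2
  rw [← hc1, ← hc2] at hiff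
  by_cases h1 : c1 = 0 <;> by_cases h2 : c2 = 0
  · rw [if_pos (hiff.mp ⟨h1, h2⟩), if_pos h1, if_pos h2]; norm_num
  · rw [if_neg (fun hh => h2 (hiff.mpr hh).2), if_pos h1, if_neg h2]; ring
  · rw [if_neg (fun hh => h1 (hiff.mpr hh).1), if_neg h1]; ring
  · rw [if_neg (fun hh => h1 (hiff.mpr hh).1), if_neg h1]; ring

lemma kron_diag (n m j1 j2 k1 k2 : ZMod 3) :
    (outer (δv n) ⊗ₖ outer (δv m)) (j1,j2) (k1,k2)
      = if j1 = n ∧ k1 = n ∧ j2 = m ∧ k2 = m then 1 else 0 := by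
  rw [Matrix.kroneckerMap_apply]
  show δv n j1 * (starRingEnd ℂ) (δv n k1) * (δv m j2 * (starRingEnd ℂ) (δv m k2)) = _
  by_cases h1 : j1 = n <;> by_cases h2 : k1 = n <;> by_cases h3 : j2 = m <;>
    by_cases h4 : k2 = m <;> simp [δv, h1, h2, h3, h4]

lemma diag_sum (d j1 j2 k1 k2 : ZMod 3) :
    ∑ n : ZMod 3, (if j1 = n ∧ k1 = n ∧ j2 = n + d ∧ k2 = n + d then (1:ℂ) else 0)
      = if k1 = j1 ∧ j2 = j1 + d ∧ k2 = j1 + d then 1 else 0 := by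
  have h : ∀ n : ZMod 3, (if j1 = n ∧ k1 = n ∧ j2 = n + d ∧ k2 = n + d then (1:ℂ) else 0)
      = if n = j1 then (if k1 = j1 ∧ j2 = j1 + d ∧ k2 = j1 + d then (1:ℂ) else 0) else 0 := by
    intro n
    rcases eq_or_ne n j1 with h | h
    · subst h; simp
    · simp [h, Ne.symm h]
  rw [Finset.sum_congr rfl fun n _ => h n, Finset.sum_ite_eq' Finset.univ j1]
  simp


lemma key (α : ℝ) :
    (Matrix.of fun i j : ZMod 3 × ZMod 3 =>
        if i.1 = i.2 ∧ j.1 = j.2 then (2 / 21 : ℂ)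
        else if i = j ∧ i.2 = i.1 + 1 then (α : ℂ) / 21
        else if i = j ∧ i.2 = i.1 + 2 then ((5 : ℂ) - (α : ℂ)) / 21
        else 0)
    = (∑ p : ZMod 3 × ZMod 3, (((2 : ℝ)/21 : ℝ) : ℂ) •
          (outer (v p.1 p.2) ⊗ₖ outer (fun n => (starRingEnd ℂ) (v p.1 p.2 n))))
      + (∑ n : ZMod 3, (((α - 2)/21 : ℝ) : ℂ) • (outer (δv n) ⊗ₖ outer (δv (n+1))))
      + (∑ n : ZMod 3, (((3 - α)/21 : ℝ) : ℂ) • (outer (δv n) ⊗ₖ outer (δv (n+2)))) := by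
  ext ⟨j1, j2⟩ ⟨k1, k2⟩
  simp only [Matrix.add_apply, Matrix.sum_apply, Matrix.smul_apply, smul_eq_mul,
    Matrix.of_apply]
  have hb : ∑ p : ZMod 3 × ZMod 3, (((2 : ℝ)/21 : ℝ) : ℂ) *
      (outer (v p.1 p.2) ⊗ₖ outer (fun n => (starRingEnd ℂ) (v p.1 p.2 n))) (j1, j2) (k1, k2)
      = (((2 : ℝ)/21 : ℝ) : ℂ) *
        (if (j1 = k1 ∧ j2 = k2) ∨ (j1 = j2 ∧ k1 = k2) then 1 else 0) := by
    rw [← Finset.mul_sum, bell_sum]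
  have hd1 : ∑ n : ZMod 3, (((α - 2)/21 : ℝ) : ℂ) *
      (outer (δv n) ⊗ₖ outer (δv (n+1))) (j1, j2) (k1, k2)
      = (((α - 2)/21 : ℝ) : ℂ) *
        (if k1 = j1 ∧ j2 = j1 + 1 ∧ k2 = j1 + 1 then 1 else 0) := by
    rw [← Finset.mul_sum, Finset.sum_congr rfl fun n _ => kron_diag n (n+1) j1 j2 k1 k2,
      diag_sum]
  have hd2 : ∑ n : ZMod 3, (((3 - α)/21 : ℝ) : ℂ) *
      (outer (δv n) ⊗ₖ outer (δv (n+2))) (j1, j2) (k1, k2)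
      = (((3 - α)/21 : ℝ) : ℂ) *
        (if k1 = j1 ∧ j2 = j1 + 2 ∧ k2 = j1 + 2 then 1 else 0) := by
    rw [← Finset.mul_sum, Finset.sum_congr rfl fun n _ => kron_diag n (n+2) j1 j2 k1 k2,
      diag_sum]
  rw [hb, hd1, hd2]
  rcases z3cases j1 with h|h|h <;> subst h <;>
    rcases z3cases j2 with h|h|h <;> subst h <;>
    rcases z3cases k1 with h|h|h <;> subst h <;>
    rcases z3cases k2 with h|h|h <;> subst h <;>
    simp (config := { decide := true }) only [Prod.mk.injEq] <;>
    push_cast <;> norm_num <;> ring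

end HorodeckiAux

end

/-- A bipartite density on `C^3 ⊗ C^3` is separable if it is a finite convex
combination of Kronecker products of `3×3` densities. -/
def IsSeparableState
    (ρ : Matrix (ZMod 3 × ZMod 3) (ZMod 3 × ZMod 3) ℂ) : Prop :=
  ∃ (n : ℕ) (w : Fin n → ℝ) (σ τ : Fin n → Matrix (ZMod 3) (ZMod 3) ℂ),
    (∀ i, 0 ≤ w i) ∧ (∑ i, w i = 1) ∧
    (∀ i, (σ i).PosSemidef ∧ (σ i).trace = 1) ∧
    (∀ i, (τ i).PosSemidef ∧ (τ i).trace = 1) ∧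
    ρ = ∑ i, (w i : ℂ) • (σ i ⊗ₖ τ i)

open HorodeckiAux in
/-- For `2 ≤ α ≤ 3`, the Horodecki density `ρ_α` on
`C³ ⊗ C³`, with entries `ρ_{nn,mm} = 2/21`, `ρ_{n(n+1),n(n+1)} = α/21`,
`ρ_{n(n+2),n(n+2)} = (5−α)/21` and all other entries zero, is separable. -/
theorem horodecki_separable (α : ℝ) (hα2 : 2 ≤ α) (hα3 : α ≤ 3)
    (ρ : Matrix (ZMod 3 × ZMod 3) (ZMod 3 × ZMod 3) ℂ)
    (hρ : ρ = Matrix.of fun i j : ZMod 3 × ZMod 3 =>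
        if i.1 = i.2 ∧ j.1 = j.2 then (2 / 21 : ℂ)
        else if i = j ∧ i.2 = i.1 + 1 then (α : ℂ) / 21
        else if i = j ∧ i.2 = i.1 + 2 then ((5 : ℂ) - (α : ℂ)) / 21
        else 0) :
    IsSeparableState ρ := by
  classical
  set K := ((ZMod 3 × ZMod 3) ⊕ (ZMod 3 ⊕ ZMod 3)) with hK
  let e : K ≃ Fin (Fintype.card K) := Fintype.equivFin K
  let W : K → ℝ := Sum.elim (fun _ => 2/21)
    (Sum.elim (fun _ => (α - 2)/21) (fun _ => (3 - α)/21))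
  let S : K → Matrix (ZMod 3) (ZMod 3) ℂ :=
    Sum.elim (fun p => outer (v p.1 p.2))
      (Sum.elim (fun n => outer (δv n)) (fun n => outer (δv n)))
  let T : K → Matrix (ZMod 3) (ZMod 3) ℂ :=
    Sum.elim (fun p => outer (fun n => (starRingEnd ℂ) (v p.1 p.2 n)))
      (Sum.elim (fun n => outer (δv (n+1))) (fun n => outer (δv (n+2))))
  refine ⟨Fintype.card K, fun i => W (e.symm i), fun i => S (e.symm i),
    fun i => T (e.symm i), ?_, ?_, ?_, ?_, ?_⟩
  · have hW : ∀ k : K, 0 ≤ W k := by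
      rintro (p | n | n) <;> simp only [W, Sum.elim_inl, Sum.elim_inr] <;> linarith
    intro i; exact hW _
  · rw [Equiv.sum_comp e.symm W]
    rw [Fintype.sum_sum_type, Fintype.sum_sum_type]
    simp only [W, Sum.elim_inl, Sum.elim_inr, Finset.sum_const, Finset.card_univ, nsmul_eq_mul]
    have h9 : (Fintype.card (ZMod 3 × ZMod 3) : ℝ) = 9 := by
      simp [Fintype.card_prod, ZMod.card]
    have h3 : (Fintype.card (ZMod 3) : ℝ) = 3 := by simp [ZMod.card]
    rw [h9, h3]
    ring
  · have hS : ∀ k : K, (S k).PosSemidef ∧ (S k).trace = 1 := by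
      rintro (p | n | n)
      · exact ⟨outer_posSemidef _, trace_outer_v _ _⟩
      · exact ⟨outer_posSemidef _, trace_outer_δ _⟩
      · exact ⟨outer_posSemidef _, trace_outer_δ _⟩
    intro i; exact hS _
  · have hT : ∀ k : K, (T k).PosSemidef ∧ (T k).trace = 1 := by
      rintro (p | n | n)
      · exact ⟨outer_posSemidef _, trace_outer_vc _ _⟩
      · exact ⟨outer_posSemidef _, trace_outer_δ _⟩
      · exact ⟨outer_posSemidef _, trace_outer_δ _⟩
    intro i; exact hT _
  · rw [hρ, key α]
    rw [Equiv.sum_comp e.symm (fun k => ((W k : ℝ) : ℂ) • (S k ⊗ₖ T k))]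
    rw [Fintype.sum_sum_type, Fintype.sum_sum_type]
    simp only [W, S, T, Sum.elim_inl, Sum.elim_inr]
    rw [add_assoc]
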